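/- arXiv:2004.10888 — 4 statements merged into one kernel-verified Lean document; each statement's English description precedes it below -/
import Mathlib

section
/- Let X be a finite type, d a probability mass function on X, r : X → ℝ, and λ > 0. Write m_d := Σ_x d(x) r(x) and V_d := Σ_x d(x) r(x)² − m_d². Then m_d − λ V_d = ⨆_{y ∈ ℝ} ( Σ_x d(x) (r(x) − λ r(x)² + 2λ r(x) y) − λ y² ), and the supremum is attained uniquely at y = m_d, where it equals m_d − λ V_d. -/
open Finset

/-- Fenchel-dual representation of the mean-variance objective: for a pmf `d` on a finite
type `X`, reward `r : X → ℝ` and `λ > 0`, with `m = ∑ x, d x * r x` and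
`V = ∑ x, d x * (r x)² − m²`, we have
`m − λ V = ⨆ y, (∑ x, d x * (r x − λ (r x)² + 2 λ (r x) y) − λ y²)`,
with the supremum attained uniquely at `y = m`. -/
theorem mean_variance_fenchel {X : Type*} [Fintype X]
    (d : X → ℝ) (hd0 : ∀ x, 0 ≤ d x) (hd1 : ∑ x, d x = 1)
    (r : X → ℝ) (lam : ℝ) (hlam : 0 < lam) :
    (∑ x, d x * r x) - lam * ((∑ x, d x * (r x) ^ 2) - (∑ x, d x * r x) ^ 2) =
      (⨆ y : ℝ, ((∑ x, d x * (r x - lam * (r x) ^ 2 + 2 * lam * r x * y)) - lam * y ^ 2)) ∧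
    ∀ y : ℝ,
      ((∑ x, d x * (r x - lam * (r x) ^ 2 + 2 * lam * r x * y)) - lam * y ^ 2 ≤
        (∑ x, d x * r x) - lam * ((∑ x, d x * (r x) ^ 2) - (∑ x, d x * r x) ^ 2)) ∧
      (((∑ x, d x * (r x - lam * (r x) ^ 2 + 2 * lam * r x * y)) - lam * y ^ 2 =
        (∑ x, d x * r x) - lam * ((∑ x, d x * (r x) ^ 2) - (∑ x, d x * r x) ^ 2)) ↔
        y = ∑ x, d x * r x) := by
  set m := ∑ x, d x * r x with hm
  set S := ∑ x, d x * (r x) ^ 2 with hS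
  set T := m - lam * (S - m ^ 2) with hT
  have key : ∀ y : ℝ,
      (∑ x, d x * (r x - lam * (r x) ^ 2 + 2 * lam * r x * y)) - lam * y ^ 2
        = T - lam * (y - m) ^ 2 := by
    intro y
    have h1 : (∑ x, d x * (r x - lam * (r x) ^ 2 + 2 * lam * r x * y))
        = m - lam * S + 2 * lam * y * m := by
      have hc : ∀ x ∈ Finset.univ (α := X),
          d x * (r x - lam * (r x) ^ 2 + 2 * lam * r x * y)
            = d x * r x - lam * (d x * (r x) ^ 2) + 2 * lam * y * (d x * r x) :=
        fun x _ => by ring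
      rw [Finset.sum_congr rfl hc, Finset.sum_add_distrib, Finset.sum_sub_distrib,
        ← Finset.mul_sum, ← Finset.mul_sum, ← hm, ← hS]
    rw [h1, hT]; ring
  have hle : ∀ y : ℝ,
      (∑ x, d x * (r x - lam * (r x) ^ 2 + 2 * lam * r x * y)) - lam * y ^ 2 ≤ T := by
    intro y
    rw [key y]
    nlinarith [sq_nonneg (y - m), hlam.le]
  constructor
  · refine le_antisymm ?_ (ciSup_le hle)
    have := le_ciSup (f := fun y : ℝ =>
        (∑ x, d x * (r x - lam * (r x) ^ 2 + 2 * lam * r x * y)) - lam * y ^ 2)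
      ⟨T, fun v ⟨y, hy⟩ => hy ▸ hle y⟩ m
    calc T = (∑ x, d x * (r x - lam * (r x) ^ 2 + 2 * lam * r x * m)) - lam * m ^ 2 := by
            rw [key m]; ring
      _ ≤ _ := this
  · intro y
    refine ⟨hle y, ?_⟩
    rw [key y]
    constructor
    · intro h
      have : (y - m) ^ 2 = 0 := by nlinarith
      have := pow_eq_zero_iff (n := 2) (by norm_num) |>.mp this
      linarith [sub_eq_zero.mp this]
    · intro h; rw [h]; ring
end

section
/- (Monotonic policy improvement.) Let X be a finite type, r : X → ℝ, λ ≥ 0, and let D be a set of probability mass functions on X. For d ∈ D define J_λ(d) := m_d − λ V_d, where m_d := Σ_x d(x) r(x) and V_d := Σ_x d(x) r(x)² − m_d². Suppose d₁ ∈ D, set y := m_{d₁}, and suppose d₂ ∈ D maximizes over D the map d ↦ Σ_x d(x) ( r(x) − λ r(x)² + 2λ r(x) y ), i.e. Σ_x d(x)(r(x) − λ r(x)² + 2λ r(x) y) ≤ Σ_x d₂(x)(r(x) − λ r(x)² + 2λ r(x) y) for every d ∈ D. Then J_λ(d₂) ≥ J_λ(d₁). -/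
open Finset

/-- Monotonic policy improvement for mean-variance policy iteration: if `d₂` maximizes
over `D` the expected augmented reward `r̂(x; y) = r x − λ (r x)² + 2 λ (r x) y` with
`y = m_{d₁}`, then `J_λ(d₂) ≥ J_λ(d₁)`, where `J_λ(d) = m_d − λ V_d`. -/
theorem mvpi_monotonic_improvement {X : Type*} [Fintype X]
    (r : X → ℝ) (lam : ℝ) (hlam : 0 ≤ lam)
    (D : Set (X → ℝ)) (hD : ∀ d ∈ D, (∀ x, 0 ≤ d x) ∧ ∑ x, d x = 1)
    (d₁ d₂ : X → ℝ) (hd₁ : d₁ ∈ D) (hd₂ : d₂ ∈ D)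
    (hmax : ∀ d ∈ D,
      (∑ x, d x * (r x - lam * (r x) ^ 2 + 2 * lam * r x * (∑ x, d₁ x * r x))) ≤
      (∑ x, d₂ x * (r x - lam * (r x) ^ 2 + 2 * lam * r x * (∑ x, d₁ x * r x)))) :
    (∑ x, d₂ x * r x) - lam * ((∑ x, d₂ x * (r x) ^ 2) - (∑ x, d₂ x * r x) ^ 2) ≥
    (∑ x, d₁ x * r x) - lam * ((∑ x, d₁ x * (r x) ^ 2) - (∑ x, d₁ x * r x) ^ 2) := by
  have h := hmax d₁ hd₁
  set m1 := ∑ x, d₁ x * r x with hm1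
  set m2 := ∑ x, d₂ x * r x with hm2
  set S1 := ∑ x, d₁ x * (r x) ^ 2 with hS1
  set S2 := ∑ x, d₂ x * (r x) ^ 2 with hS2
  have e1 : (∑ x, d₁ x * (r x - lam * (r x) ^ 2 + 2 * lam * r x * m1))
      = m1 - lam * S1 + 2 * lam * m1 * m1 := by
    simp only [mul_add, mul_sub, Finset.sum_add_distrib, Finset.sum_sub_distrib]
    congr 1
    · congr 1
      rw [Finset.mul_sum]
      exact Finset.sum_congr rfl fun x _ => by ring
    · rw [Finset.mul_sum]
      exact Finset.sum_congr rfl fun x _ => by ring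
  have e2 : (∑ x, d₂ x * (r x - lam * (r x) ^ 2 + 2 * lam * r x * m1))
      = m2 - lam * S2 + 2 * lam * m1 * m2 := by
    simp only [mul_add, mul_sub, Finset.sum_add_distrib, Finset.sum_sub_distrib]
    congr 1
    · congr 1
      rw [Finset.mul_sum]
      exact Finset.sum_congr rfl fun x _ => by ring
    · rw [Finset.mul_sum]
      exact Finset.sum_congr rfl fun x _ => by ring
  rw [e1, e2] at h
  nlinarith [sq_nonneg (m2 - m1), mul_nonneg hlam (sq_nonneg (m2 - m1))]
end

section
/- (Stationarity transfer.) Let E be a real normed vector space, let A B : E → ℝ be differentiable at θ₀ ∈ E, let λ > 0, and define F : E × ℝ → ℝ by F(θ, y) := A(θ) + λ (2 B(θ) y − y²) and J : E → ℝ by J(θ) := A(θ) + λ (B(θ))². If (θ₀, y₀) is a stationary point of F, i.e. the Fréchet derivative of F at (θ₀, y₀) is zero, then y₀ = B(θ₀) and the Fréchet derivative of J at θ₀ is zero. -/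
/-- Stationarity transfer: if `(θ₀, y₀)` is a stationary point of the lifted two-block
objective `F(θ, y) = A(θ) + λ (2 B(θ) y − y²)` with `λ > 0`, then `y₀ = B(θ₀)` and `θ₀`
is a stationary point of `J(θ) = A(θ) + λ (B(θ))²`. -/
theorem stationarity_transfer {E : Type*} [NormedAddCommGroup E] [NormedSpace ℝ E]
    (A B : E → ℝ) (θ₀ : E) (y₀ : ℝ)
    (hA : DifferentiableAt ℝ A θ₀) (hB : DifferentiableAt ℝ B θ₀)
    (lam : ℝ) (hlam : 0 < lam)
    (hF : fderiv ℝ (fun p : E × ℝ => A p.1 + lam * (2 * B p.1 * p.2 - p.2 ^ 2)) (θ₀, y₀) = 0) :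
    y₀ = B θ₀ ∧ fderiv ℝ (fun θ => A θ + lam * (B θ) ^ 2) θ₀ = 0 := by
  set f : E × ℝ → ℝ := fun p => A p.1 + lam * (2 * B p.1 * p.2 - p.2 ^ 2) with hfdef
  have hAf : DifferentiableAt ℝ (fun p : E × ℝ => A p.1) (θ₀, y₀) :=
    hA.comp _ differentiableAt_fst
  have hBf : DifferentiableAt ℝ (fun p : E × ℝ => B p.1) (θ₀, y₀) :=
    hB.comp _ differentiableAt_fst
  have hf : DifferentiableAt ℝ f (θ₀, y₀) := by
    apply hAf.add
    apply DifferentiableAt.const_mul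
    exact ((hBf.const_mul 2).mul differentiableAt_snd).sub (differentiableAt_snd.pow 2)
  have hF0 : HasFDerivAt f (0 : E × ℝ →L[ℝ] ℝ) (θ₀, y₀) := hF ▸ hf.hasFDerivAt
  -- partial derivative in y
  have hincl2 : HasFDerivAt (fun y : ℝ => ((θ₀, y) : E × ℝ))
      ((0 : ℝ →L[ℝ] E).prod (ContinuousLinearMap.id ℝ ℝ)) y₀ :=
    (hasFDerivAt_const θ₀ y₀).prodMk (hasFDerivAt_id y₀)
  have hy0 : HasDerivAt (fun y : ℝ => f (θ₀, y)) 0 y₀ := by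
    have := (hF0.comp y₀ hincl2).hasDerivAt
    exact this
  have hy' : HasDerivAt (fun y : ℝ => f (θ₀, y)) (lam * (2 * B θ₀ - 2 * y₀)) y₀ := by
    have h1 : HasDerivAt (fun y : ℝ => 2 * B θ₀ * y - y ^ 2) (2 * B θ₀ - 2 * y₀) y₀ := by
      have h := ((hasDerivAt_id y₀).const_mul (2 * B θ₀)).sub (hasDerivAt_pow 2 y₀)
      simp at h
      exact h
    convert (hasDerivAt_const y₀ (A θ₀)).add (h1.const_mul lam) using 1
    all_goals try rfl
    simp
  have hyeq : lam * (2 * B θ₀ - 2 * y₀) = 0 := by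
    have := hy0.unique hy'
    linarith [this]
  have hy : y₀ = B θ₀ := by
    have := (mul_eq_zero.mp hyeq).resolve_left hlam.ne'
    linarith
  refine ⟨hy, ?_⟩
  -- partial derivative in θ
  have hincl1 : HasFDerivAt (fun θ : E => ((θ, y₀) : E × ℝ))
      ((ContinuousLinearMap.id ℝ E).prod (0 : E →L[ℝ] ℝ)) θ₀ :=
    (hasFDerivAt_id θ₀).prodMk (hasFDerivAt_const y₀ θ₀)
  have hθ0 : HasFDerivAt (fun θ : E => f (θ, y₀)) (0 : E →L[ℝ] ℝ) θ₀ := by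
    have := hF0.comp θ₀ hincl1
    exact this
  have hθ' : HasFDerivAt (fun θ : E => f (θ, y₀))
      (fderiv ℝ A θ₀ + (lam * (2 * y₀)) • fderiv ℝ B θ₀) θ₀ := by
    have hb := hB.hasFDerivAt
    have h2 : HasFDerivAt (fun θ => 2 * B θ * y₀ - y₀ ^ 2)
        ((2 * y₀) • fderiv ℝ B θ₀) θ₀ := by
      have := ((hb.const_mul 2).mul_const y₀).sub_const (y₀ ^ 2)
      convert this using 1
      all_goals try rfl
      rw [smul_smul, mul_comm]
    have := hA.hasFDerivAt.add (h2.const_mul lam)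
    convert this using 1
    all_goals try rfl
    rw [smul_smul]
  have heq : fderiv ℝ A θ₀ + (lam * (2 * y₀)) • fderiv ℝ B θ₀ = 0 := hθ'.unique hθ0
  have hJ : HasFDerivAt (fun θ => A θ + lam * (B θ) ^ 2)
      (fderiv ℝ A θ₀ + (lam * (2 * B θ₀)) • fderiv ℝ B θ₀) θ₀ := by
    have h2 : HasFDerivAt (fun θ => (B θ) ^ 2) ((2 * B θ₀) • fderiv ℝ B θ₀) θ₀ := by
      have h := hB.hasFDerivAt.mul hB.hasFDerivAt
      simp only [pow_two]
      convert h using 1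
      all_goals try rfl
      rw [two_mul, add_smul]
    have := hA.hasFDerivAt.add (h2.const_mul lam)
    convert this using 1
    all_goals try rfl
    rw [smul_smul]
  rw [hJ.fderiv]
  rw [← hy]
  exact heq
end

section
/- (Convergence of two-block coordinate ascent for the mean-variance objective.) Let n : ℕ, let Θ ⊆ ℝⁿ be open, let A B : ℝⁿ → ℝ be continuously differentiable, let λ > 0, and define F(θ, y) := A(θ) + λ (2 B(θ) y − y²) and J(θ) := A(θ) + λ (B(θ))². Let θ₀ ∈ Θ and assume the set { (θ, y) ∈ Θ × ℝ | F(θ, y) ≥ J(θ₀) } is compact. Suppose sequences (θ_k) in Θ and (y_k) in ℝ satisfy, for every k ≥ 0: y_{k+1} = B(θ_k) (so y_{k+1} maximizes y ↦ F(θ_k, y)), and θ_{k+1} ∈ Θ attains the supremum of θ ↦ F(θ, y_{k+1}) over Θ. Then: (i) J(θ_{k+1}) ≥ J(θ_k) for all k; (ii) the sequence (J(θ_k)) converges; and (iii) liminf_{k→∞} ‖∇J(θ_k)‖ = 0, where ∇J(θ) denotes the gradient of J at θ. -/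
open Filter InnerProductSpace

/-- Convergence of two-block coordinate ascent for the mean-variance objective
`J(θ) = A(θ) + λ (B(θ))²` with lifted objective `F(θ, y) = A(θ) + λ (2 B(θ) y − y²)`:
under compactness of the lifted superlevel set, the alternating updates
`y_{k+1} = B(θ_k)` and `θ_{k+1} ∈ argmax_{θ ∈ Θ} F(θ, y_{k+1})` produce a
monotonically improving sequence, `J(θ_k)` converges, and
`liminf_k ‖∇J(θ_k)‖ = 0`. -/
theorem mvpi_convergence (n : ℕ) (Θ : Set (EuclideanSpace ℝ (Fin n))) (hΘ : IsOpen Θ)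
    (A B : EuclideanSpace ℝ (Fin n) → ℝ)
    (hA : ContDiff ℝ 1 A) (hB : ContDiff ℝ 1 B)
    (lam : ℝ) (hlam : 0 < lam)
    (θseq : ℕ → EuclideanSpace ℝ (Fin n)) (yseq : ℕ → ℝ)
    (hθ0 : θseq 0 ∈ Θ)
    (hcpt : IsCompact {p : EuclideanSpace ℝ (Fin n) × ℝ |
      p.1 ∈ Θ ∧ A (θseq 0) + lam * (B (θseq 0)) ^ 2 ≤
        A p.1 + lam * (2 * B p.1 * p.2 - p.2 ^ 2)})
    (hy : ∀ k : ℕ, yseq (k + 1) = B (θseq k))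
    (hθmem : ∀ k : ℕ, θseq (k + 1) ∈ Θ)
    (hmax : ∀ k : ℕ, ∀ θ ∈ Θ,
      A θ + lam * (2 * B θ * yseq (k + 1) - (yseq (k + 1)) ^ 2) ≤
      A (θseq (k + 1)) + lam * (2 * B (θseq (k + 1)) * yseq (k + 1) - (yseq (k + 1)) ^ 2)) :
    (∀ k : ℕ, A (θseq (k + 1)) + lam * (B (θseq (k + 1))) ^ 2 ≥
      A (θseq k) + lam * (B (θseq k)) ^ 2) ∧
    (∃ Jlim : ℝ, Tendsto (fun k => A (θseq k) + lam * (B (θseq k)) ^ 2) atTop (nhds Jlim)) ∧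
    liminf (fun k => ‖gradient (fun θ => A θ + lam * (B θ) ^ 2) (θseq k)‖) atTop = 0 := by
  set J : EuclideanSpace ℝ (Fin n) → ℝ := fun θ => A θ + lam * (B θ) ^ 2 with hJdef
  have hAd : Differentiable ℝ A := hA.differentiable one_ne_zero
  have hBd : Differentiable ℝ B := hB.differentiable one_ne_zero
  have hmem : ∀ k, θseq k ∈ Θ := by
    intro k
    cases k with
    | zero => exact hθ0
    | succ k => exact hθmem k
  -- key inequality
  have hkey : ∀ k, J (θseq k) + lam * (B (θseq (k + 1)) - B (θseq k)) ^ 2 ≤ J (θseq (k + 1)) := by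
    intro k
    have h1 := hmax k (θseq k) (hmem k)
    rw [hy k] at h1
    simp only [hJdef]
    nlinarith [h1]
  have hstep : ∀ k, J (θseq k) ≤ J (θseq (k + 1)) := by
    intro k
    nlinarith [hkey k, sq_nonneg (B (θseq (k + 1)) - B (θseq k)), hlam]
  have hmono : Monotone fun k => J (θseq k) := monotone_nat_of_le_succ hstep
  -- membership of (θ_k, B θ_k) in the compact set
  set K : Set (EuclideanSpace ℝ (Fin n) × ℝ) := {p : EuclideanSpace ℝ (Fin n) × ℝ |
      p.1 ∈ Θ ∧ A (θseq 0) + lam * (B (θseq 0)) ^ 2 ≤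
        A p.1 + lam * (2 * B p.1 * p.2 - p.2 ^ 2)} with hKdef
  have hKmem : ∀ k, (θseq k, B (θseq k)) ∈ K := by
    intro k
    refine ⟨hmem k, ?_⟩
    have h0 : J (θseq 0) ≤ J (θseq k) := hmono (Nat.zero_le k)
    simp only [hJdef] at h0
    nlinarith [h0]
  -- boundedness of J (θseq k)
  have hJcont : Continuous J := (hA.continuous).add (continuous_const.mul (hB.continuous.pow 2))
  obtain ⟨C, hC⟩ := hcpt.bddAbove_image ((hJcont.comp continuous_fst).continuousOn)
  have hbdd : ∀ k, J (θseq k) ≤ C := fun k =>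
    hC ⟨(θseq k, B (θseq k)), hKmem k, rfl⟩
  -- convergence of J (θseq k)
  have hJtend : Tendsto (fun k => J (θseq k)) atTop (nhds (⨆ k, J (θseq k))) :=
    tendsto_atTop_ciSup hmono ⟨C, by rintro x ⟨k, rfl⟩; exact hbdd k⟩
  have hshift : Tendsto (fun k => J (θseq (k + 1))) atTop (nhds (⨆ k, J (θseq k))) :=
    hJtend.comp (tendsto_add_atTop_nat 1)
  have hdiff : Tendsto (fun k => J (θseq (k + 1)) - J (θseq k)) atTop (nhds 0) := by
    simpa using hshift.sub hJtend
  -- the B-differences tend to 0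
  have hsq : Tendsto (fun k => (B (θseq (k + 1)) - B (θseq k)) ^ 2) atTop (nhds 0) := by
    apply squeeze_zero (fun k => sq_nonneg _)
      (g := fun k => (J (θseq (k + 1)) - J (θseq k)) / lam)
    · intro k
      rw [le_div_iff₀ hlam]
      nlinarith [hkey k]
    · simpa using hdiff.div_const lam
  have habs : Tendsto (fun k => |B (θseq (k + 1)) - B (θseq k)|) atTop (nhds 0) := by
    have h := (Real.continuous_sqrt.tendsto 0).comp hsq
    rw [Real.sqrt_zero] at h
    refine h.congr fun k => ?_
    simp [Function.comp, Real.sqrt_sq_eq_abs]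
  -- bound on the gradient norm via the compact set
  have hfBcont : Continuous fun θ => ‖fderiv ℝ B θ‖ := (hB.continuous_fderiv one_ne_zero).norm
  obtain ⟨M, hM⟩ := (hcpt.image continuous_fst).bddAbove_image hfBcont.continuousOn
  have hMb : ∀ k, ‖fderiv ℝ B (θseq k)‖ ≤ M := fun k =>
    hM ⟨θseq k, ⟨(θseq k, B (θseq k)), hKmem k, rfl⟩, rfl⟩
  -- gradient identity: ∇J(θ_{k+1}) comes only from the quadratic remainder
  have hgradnorm : ∀ x, ‖gradient J x‖ = ‖fderiv ℝ J x‖ := by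
    intro x
    rw [gradient]
    exact (toDual ℝ _).symm.norm_map _
  have hgradbound : ∀ k, ‖gradient J (θseq (k + 1))‖ ≤
      lam * 2 * M * |B (θseq (k + 1)) - B (θseq k)| := by
    intro k
    set y : ℝ := B (θseq k) with hydef
    set θ' := θseq (k + 1) with hθ'def
    set f' := fderiv ℝ B θ' with hf'def
    set G : EuclideanSpace ℝ (Fin n) → ℝ :=
      fun θ => A θ + lam * (2 * B θ * y - y ^ 2) with hGdef
    set H : EuclideanSpace ℝ (Fin n) → ℝ :=
      fun θ => lam * ((B θ - y) * (B θ - y)) with hHdef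
    have hGd : DifferentiableAt ℝ G θ' := by
      apply DifferentiableAt.add (hAd θ')
      apply DifferentiableAt.const_mul
      apply DifferentiableAt.sub_const
      exact ((hBd θ').const_mul 2).mul_const y
    have hloc : IsLocalMax G θ' := by
      filter_upwards [hΘ.mem_nhds (hθmem k)] with θ hθ
      have h1 := hmax k θ hθ
      rw [hy k] at h1
      exact h1
    have hG0 : fderiv ℝ G θ' = 0 := hloc.fderiv_eq_zero
    have hH : HasFDerivAt H (lam • ((B θ' - y) • f' + (B θ' - y) • f')) θ' := by
      have h1 : HasFDerivAt (fun θ => B θ - y) f' θ' := ((hBd θ').hasFDerivAt).sub_const y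
      exact (h1.mul h1).const_mul lam
    have hJGH : J = fun θ => G θ + H θ := by
      funext θ
      simp only [hJdef, hGdef, hHdef]
      ring
    have hfJ : fderiv ℝ J θ' = lam • ((B θ' - y) • f' + (B θ' - y) • f') := by
      rw [hJGH, fderiv_fun_add hGd hH.differentiableAt, hG0, hH.fderiv, zero_add]
    rw [hgradnorm, hfJ]
    have hcollect : (B θ' - y) • f' + (B θ' - y) • f' = (2 * (B θ' - y)) • f' := by
      rw [← add_smul]; ring_nf
    rw [hcollect, norm_smul, norm_smul, Real.norm_eq_abs, Real.norm_eq_abs,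
      abs_of_pos hlam, abs_mul]
    have hMk : ‖f'‖ ≤ M := hMb (k + 1)
    have h2 : |(2 : ℝ)| * |B θ' - y| * ‖f'‖ ≤ 2 * |B θ' - y| * M := by
      rw [abs_two]
      have := mul_le_mul_of_nonneg_left hMk
        (mul_nonneg (by norm_num : (0:ℝ) ≤ 2) (abs_nonneg (B θ' - y)))
      linarith
    calc lam * (|2| * |B θ' - y| * ‖f'‖) ≤ lam * (2 * |B θ' - y| * M) := by
          exact mul_le_mul_of_nonneg_left h2 hlam.le
      _ = lam * 2 * M * |B θ' - y| := by ring
  -- gradient norms tend to 0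
  have hgtend : Tendsto (fun k => ‖gradient J (θseq (k + 1))‖) atTop (nhds 0) := by
    apply squeeze_zero (fun k => norm_nonneg _)
      (g := fun k => lam * 2 * M * |B (θseq (k + 1)) - B (θseq k)|) hgradbound
    simpa using habs.const_mul (lam * 2 * M)
  have hgtend' : Tendsto (fun k => ‖gradient J (θseq k)‖) atTop (nhds 0) :=
    (tendsto_add_atTop_iff_nat 1).mp hgtend
  exact ⟨hstep, ⟨_, hJtend⟩, hgtend'.liminf_eq⟩
end
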